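/- Let A be symmetric with ‖A‖_op ≤ β, b ∈ ℝ^d, ρ > 0, r > 0, and let s be the global minimizer of f_cu(x) = (1/2)xᵀAx + bᵀx + (ρ/3)‖x‖³. Then f_cu(s) ≤ −(ρ/6)‖s‖³. Consequently, if x satisfies f_cu(x) ≤ f_cu(s) + (ρr/12)‖s‖² and ‖s‖ ≥ r, then f_cu(x) ≤ −(ρ/12)r³. -/

import Mathlib

open Matrix

noncomputable def eNorm {d : ℕ} (x : Fin d → ℝ) : ℝ := Real.sqrt (x ⬝ᵥ x)

theorem stmt_19 {d : ℕ} (A : Matrix (Fin d) (Fin d) ℝ) (hA : A.IsSymm)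
    (β : ℝ) (hop : ∀ y, eNorm (A.mulVec y) ≤ β * eNorm y)
    (b : Fin d → ℝ) (ρ r : ℝ) (hρ : 0 < ρ) (hr : 0 < r)
    (fcu : (Fin d → ℝ) → ℝ)
    (hfcu : ∀ x, fcu x = (1/2) * (x ⬝ᵥ A.mulVec x) + b ⬝ᵥ x + (ρ/3) * eNorm x ^ 3)
    (s : Fin d → ℝ)
    (hglob : ∀ x, fcu s ≤ fcu x)
    (hstat : (A + (ρ * eNorm s) • (1 : Matrix (Fin d) (Fin d) ℝ)).mulVec s = -b)
    (hpsd : (A + (ρ * eNorm s) • (1 : Matrix (Fin d) (Fin d) ℝ)).PosSemidef) :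
    fcu s ≤ -(ρ/6) * eNorm s ^ 3 ∧
    ∀ x : Fin d → ℝ, fcu x ≤ fcu s + (ρ * r / 12) * eNorm s ^ 2 → r ≤ eNorm s →
      fcu x ≤ -(ρ/12) * r ^ 3 := by
  have hself : (0:ℝ) ≤ s ⬝ᵥ s := Finset.sum_nonneg fun i _ => mul_self_nonneg _
  set n := eNorm s with hndef
  have hn0 : 0 ≤ n := Real.sqrt_nonneg _
  have hn2 : n ^ 2 = s ⬝ᵥ s := Real.sq_sqrt hself
  have hmv : A.mulVec s + (ρ * n) • s = -b := by
    have h := hstat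
    rwa [Matrix.add_mulVec, Matrix.smul_mulVec, Matrix.one_mulVec] at h
  have hbs : b ⬝ᵥ s = -(s ⬝ᵥ A.mulVec s) - ρ * n * (s ⬝ᵥ s) := by
    have h := congrArg (fun v => v ⬝ᵥ s) hmv
    simp only [add_dotProduct, smul_dotProduct, neg_dotProduct, smul_eq_mul] at h
    rw [dotProduct_comm s (A.mulVec s)]
    linarith
  have hstars : star s = s := by ext i; simp
  have hpsd' : 0 ≤ s ⬝ᵥ A.mulVec s + ρ * n * (s ⬝ᵥ s) := by
    have h := hpsd.dotProduct_mulVec_nonneg s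
    rw [hstars, Matrix.add_mulVec, Matrix.smul_mulVec, Matrix.one_mulVec,
      dotProduct_add, dotProduct_smul, smul_eq_mul] at h
    exact_mod_cast h
  have hfs : fcu s = -(1/2) * (s ⬝ᵥ A.mulVec s) - (2*ρ/3) * n ^ 3 := by
    rw [hfcu s, hbs, ← hndef]
    have : n ^ 3 = n * n ^ 2 := by ring
    rw [this, hn2]
    ring
  have key : fcu s ≤ -(ρ/6) * n ^ 3 := by
    have hq : -(ρ * n * (s ⬝ᵥ s)) ≤ s ⬝ᵥ A.mulVec s := by linarith
    have h2 : ρ * n * (s ⬝ᵥ s) = ρ * n ^ 3 := by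
      rw [← hn2]; ring
    rw [hfs]
    nlinarith
  refine ⟨key, fun x hx hrs => ?_⟩
  have h1 : ρ * r * n ^ 2 ≤ ρ * n ^ 3 := by
    nlinarith [mul_le_mul_of_nonneg_left hrs (mul_nonneg hρ.le (sq_nonneg n))]
  have h2 : ρ * r ^ 3 ≤ ρ * n ^ 3 := by
    have := pow_le_pow_left₀ hr.le hrs 3
    nlinarith
  nlinarith
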